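/- For every real v with 0 < v < 1 and every real x, the partial theta function satisfies the identity θ(-v, x) = θ(v^4, -x^2/v) - v·x·θ(v^4, -v·x^2). -/

import Mathlib

/-- The partial theta function `θ(q,x) = ∑_{j=0}^∞ q^(j(j+1)/2) x^j`. -/
noncomputable def theta (q x : ℝ) : ℝ := ∑' j : ℕ, q ^ (j * (j + 1) / 2) * x ^ j

open Filter in
lemma theta_summable (q x : ℝ) (hq : |q| < 1) :
    Summable fun j : ℕ => q ^ (j * (j + 1) / 2) * x ^ j := by
  apply summable_of_ratio_norm_eventually_le (r := 1/2) (by norm_num)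
  have h0 : Tendsto (fun n : ℕ => |q| ^ (n+1) * |x|) atTop (nhds 0) := by
    have := (tendsto_pow_atTop_nhds_zero_of_lt_one (abs_nonneg q) hq).mul_const |x|
    simpa [Function.comp_def] using this.comp (tendsto_add_atTop_nat 1)
  filter_upwards [h0.eventually (ge_mem_nhds (by norm_num : (0:ℝ) < 1/2))] with n hn
  have hdiv : (n+1)*(n+2)/2 = n*(n+1)/2 + (n+1) := by
    obtain ⟨m, hm⟩ := Nat.even_mul_succ_self n
    have h2 : (n+1)*(n+2) = n*(n+1) + 2*(n+1) := by ring
    omega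
  have : ‖q ^ ((n+1)*((n+1)+1)/2) * x ^ (n+1)‖
      = (|q|^(n+1) * |x|) * ‖q ^ (n*(n+1)/2) * x ^ n‖ := by
    simp only [norm_mul, norm_pow, Real.norm_eq_abs]
    rw [show (n+1)*((n+1)+1)/2 = (n+1)*(n+2)/2 by ring_nf, hdiv, pow_add, pow_succ]
    ring
  rw [this]
  exact mul_le_mul_of_nonneg_right hn (norm_nonneg _)

theorem stmt_0 (v x : ℝ) (hv : 0 < v) (hv1 : v < 1) :
    theta (-v) x = theta (v ^ 4) (-x ^ 2 / v) - v * x * theta (v ^ 4) (-(v * x ^ 2)) := by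
  have hv0 : v ≠ 0 := ne_of_gt hv
  set f : ℕ → ℝ := fun j => (-v) ^ (j * (j + 1) / 2) * x ^ j with hf
  have hs : Summable f := theta_summable (-v) x (by rwa [abs_neg, abs_of_pos hv])
  have he : Summable fun k => f (2 * k) :=
    hs.comp_injective (fun a b h => by omega)
  have ho : Summable fun k => f (2 * k + 1) :=
    hs.comp_injective (fun a b h => by omega)
  have heven : ∀ k : ℕ, f (2*k) = (v^4) ^ (k*(k+1)/2) * (-x^2/v)^k := by
    intro k
    have h1 : 2*k*(2*k+1)/2 = k*(2*k+1) := by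
      rw [show 2*k*(2*k+1) = 2*(k*(2*k+1)) by ring, Nat.mul_div_cancel_left _ (by norm_num)]
    have h2 : (v^4) ^ (k*(k+1)/2) = v ^ (2*(k*(k+1))) := by
      rw [← pow_mul]; congr 1
      obtain ⟨m, hm⟩ := Nat.even_mul_succ_self k
      omega
    have h3 : ((-1:ℝ)) ^ (k*(2*k+1)) = (-1)^k := by
      rw [mul_comm, pow_mul, Odd.neg_one_pow ⟨k, by ring⟩]
    show (-v) ^ (2*k*(2*k+1)/2) * x ^ (2*k) = _
    rw [h1, h2, neg_pow, h3, div_pow, neg_pow (x^2), ← pow_mul]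
    rw [show 2*(k*(k+1)) = k*(2*k+1) + k by ring, pow_add]
    field_simp
  have hodd : ∀ k : ℕ, f (2*k+1) = -(v*x) * ((v^4) ^ (k*(k+1)/2) * (-(v*x^2))^k) := by
    intro k
    have h1 : (2*k+1)*((2*k+1)+1)/2 = (2*k+1)*(k+1) := by
      rw [show (2*k+1)*((2*k+1)+1) = 2*((2*k+1)*(k+1)) by ring,
        Nat.mul_div_cancel_left _ (by norm_num)]
    have h2 : (v^4) ^ (k*(k+1)/2) = v ^ (2*(k*(k+1))) := by
      rw [← pow_mul]; congr 1
      obtain ⟨m, hm⟩ := Nat.even_mul_succ_self k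
      omega
    have h3 : ((-1:ℝ)) ^ ((2*k+1)*(k+1)) = (-1)^(k+1) := by
      rw [pow_mul, Odd.neg_one_pow ⟨k, by ring⟩]
    show (-v) ^ ((2*k+1)*((2*k+1)+1)/2) * x ^ (2*k+1) = _
    rw [h1, h2, neg_pow, h3, neg_pow (v*x^2), mul_pow, ← pow_mul]
    rw [show (2*k+1)*(k+1) = 2*(k*(k+1)) + k + 1 by ring, pow_add, pow_add, pow_succ]
    ring
  have key : (∑' k, f (2*k)) + ∑' k, f (2*k+1) = ∑' k, f k := tsum_even_add_odd he ho
  have e1 : (∑' k, f (2*k)) = theta (v^4) (-x^2/v) := tsum_congr heven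
  have e2 : (∑' k, f (2*k+1)) = -(v*x) * theta (v^4) (-(v*x^2)) := by
    rw [tsum_congr hodd, tsum_mul_left]; rfl
  show (∑' k, f k) = _
  rw [← key, e1, e2]
  ring
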